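/- Let A ∈ M_n(ℂ) with A11 invertible. Then A is a P-matrix if and only if ppt(A) is a P-matrix. -/

import Mathlib

open Matrix


/-- A complex matrix is a P-matrix if every principal minor is a positive real
number. -/
def IsPMatrix {ι : Type*} [Fintype ι] [DecidableEq ι] (A : Matrix ι ι ℂ) : Prop :=
  ∀ α : Finset ι, α.Nonempty →
    ∃ r : ℝ, 0 < r ∧
      (A.submatrix (fun i : {x // x ∈ α} => (i : ι))
        (fun i : {x // x ∈ α} => (i : ι))).det = (r : ℂ)

section Fill
variable {ι : Type*} [Fintype ι] [DecidableEq ι]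

set_option maxHeartbeats 1000000 in
lemma fill_det (M : Matrix ι ι ℂ) (S : Finset ι) :
    (Matrix.of fun i j => if i ∈ S then M i j else if i = j then (1 : ℂ) else 0).det
      = (M.submatrix (fun i : {x // x ∈ S} => (i : ι))
          (fun i : {x // x ∈ S} => (i : ι))).det := by
  set N : Matrix ι ι ℂ :=
    Matrix.of fun i j => if i ∈ S then M i j else if i = j then (1 : ℂ) else 0 with hN
  have h0 : ∀ i, ¬ (i ∈ S) → ∀ j, (j ∈ S) → N i j = 0 := by
    intro i hi j hj
    have hij : i ≠ j := fun h => hi (h ▸ hj)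
    simp [hN, if_neg hi, if_neg hij]
  have htri := Matrix.twoBlockTriangular_det N (fun i => i ∈ S) h0
  rw [htri]
  have h2 : (Matrix.toSquareBlockProp N (fun i => ¬ (fun i => i ∈ S) i)) = 1 := by
    ext i j
    have hc : ((i : ι) = (j : ι)) ↔ i = j := Subtype.coe_inj
    have hi2 : ¬ ((i : ι) ∈ S) := i.2
    simp [Matrix.toSquareBlockProp, hN, Matrix.one_apply, hi2, hc]
  rw [h2, Matrix.det_one, mul_one]
  have h3 : (Matrix.toSquareBlockProp N (fun i => i ∈ S))
      = M.submatrix (fun i : {x // x ∈ S} => (i : ι)) (fun i : {x // x ∈ S} => (i : ι)) := by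
    ext i j
    simp [Matrix.toSquareBlockProp, hN, i.2]
  rw [h3]
  convert rfl

end Fill

section Key
variable {k l : Type*} [Fintype k] [Fintype l] [DecidableEq k] [DecidableEq l]

/-- flip the k-part of a subset of `k ⊕ l` -/
def pflip (S : Finset (k ⊕ l)) : Finset (k ⊕ l) :=
  Finset.univ.filter (fun x => (x.isLeft ∧ x ∉ S) ∨ (x.isRight ∧ x ∈ S))

lemma mem_pflip_inl (S : Finset (k ⊕ l)) (a : k) :
    Sum.inl a ∈ pflip S ↔ Sum.inl a ∉ S := by
  simp [pflip]

lemma mem_pflip_inr (S : Finset (k ⊕ l)) (b : l) :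
    Sum.inr b ∈ pflip S ↔ Sum.inr b ∈ S := by
  simp [pflip]

lemma key_det (A11 : Matrix k k ℂ) (A12 : Matrix k l ℂ) (A21 : Matrix l k ℂ)
    (A22 : Matrix l l ℂ) (h : IsUnit A11.det) (S : Finset (k ⊕ l)) :
    ((Matrix.fromBlocks A11⁻¹ (-(A11⁻¹ * A12)) (A21 * A11⁻¹)
        (A22 - A21 * A11⁻¹ * A12)).submatrix
        (fun i : {x // x ∈ S} => (i : k ⊕ l)) (fun i : {x // x ∈ S} => (i : k ⊕ l))).det
        * A11.det
      = ((Matrix.fromBlocks A11 A12 A21 A22).submatrix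
        (fun i : {x // x ∈ pflip S} => (i : k ⊕ l))
        (fun i : {x // x ∈ pflip S} => (i : k ⊕ l))).det := by
  set B := Matrix.fromBlocks A11⁻¹ (-(A11⁻¹ * A12)) (A21 * A11⁻¹) (A22 - A21 * A11⁻¹ * A12)
    with hB
  set C := Matrix.fromBlocks A11 A12 (0 : Matrix l k ℂ) (1 : Matrix l l ℂ) with hC
  set D := Matrix.fromBlocks (1 : Matrix k k ℂ) (0 : Matrix k l ℂ) A21 A22 with hD
  have hBC : B * C = D := by
    rw [hB, hC, hD, Matrix.fromBlocks_multiply]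
    simp [Matrix.mul_assoc, Matrix.nonsing_inv_mul _ h]
  have hfact : (Matrix.of fun i j => if i ∈ S then B i j else if i = j then (1 : ℂ) else 0) * C
      = (Matrix.of fun i j => if i ∈ pflip S then (Matrix.fromBlocks A11 A12 A21 A22) i j
          else if i = j then (1 : ℂ) else 0) := by
    have step1 : (Matrix.of fun i j =>
        if i ∈ S then B i j else if i = j then (1 : ℂ) else 0) * C
        = Matrix.of fun i j => if i ∈ S then D i j else C i j := by
      ext i j
      simp only [Matrix.mul_apply, Matrix.of_apply]
      by_cases hi : i ∈ S
      · simp only [if_pos hi]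
        rw [← Matrix.mul_apply, hBC]
      · simp only [if_neg hi]
        simp [ite_mul, Finset.sum_ite_eq, Finset.mem_univ]
    rw [step1]
    ext i j
    cases i with
    | inl a =>
      by_cases hi : Sum.inl a ∈ S
      · have hp : Sum.inl a ∉ pflip S := by simp [mem_pflip_inl, hi]
        cases j <;>
          simp [hi, hp, hD, Matrix.one_apply, Sum.inl.injEq]
      · have hp : Sum.inl a ∈ pflip S := by simp [mem_pflip_inl, hi]
        cases j <;> simp [hi, hp, hC]
    | inr b =>
      by_cases hi : Sum.inr b ∈ S
      · have hp : Sum.inr b ∈ pflip S := by simp [mem_pflip_inr, hi]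
        cases j <;> simp [hi, hp, hD]
      · have hp : Sum.inr b ∉ pflip S := by simp [mem_pflip_inr, hi]
        cases j <;>
          simp [hi, hp, hC, Matrix.one_apply, Sum.inr.injEq]
  have := congrArg Matrix.det hfact
  rw [Matrix.det_mul] at this
  rw [fill_det, fill_det] at this
  rw [hC, Matrix.det_fromBlocks_zero₂₁, Matrix.det_one, mul_one] at this
  exact this

lemma one_dir (A11 : Matrix k k ℂ) (A12 : Matrix k l ℂ) (A21 : Matrix l k ℂ)
    (A22 : Matrix l l ℂ) (h : IsUnit A11.det)
    (hA : IsPMatrix (Matrix.fromBlocks A11 A12 A21 A22)) :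
    IsPMatrix (Matrix.fromBlocks A11⁻¹ (-(A11⁻¹ * A12)) (A21 * A11⁻¹)
      (A22 - A21 * A11⁻¹ * A12)) := by
  have hA11 : ∃ r0 : ℝ, 0 < r0 ∧ A11.det = (r0 : ℂ) := by
    have hkey := key_det A11 A12 A21 A22 h (∅ : Finset (k ⊕ l))
    haveI : IsEmpty {x // x ∈ (∅ : Finset (k ⊕ l))} :=
      ⟨fun x => Finset.notMem_empty _ x.2⟩
    rw [Matrix.det_isEmpty, one_mul] at hkey
    rcases isEmpty_or_nonempty k with hk | hk
    · exact ⟨1, one_pos, by simp [Matrix.det_isEmpty]⟩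
    · obtain ⟨a⟩ := hk
      have hmem : Sum.inl a ∈ pflip (∅ : Finset (k ⊕ l)) := by
        simp [mem_pflip_inl]
      obtain ⟨r0, hr0, hd⟩ := hA _ ⟨_, hmem⟩
      exact ⟨r0, hr0, hkey.trans hd⟩
  obtain ⟨r0, hr0, hd0⟩ := hA11
  intro S _
  have hkey := key_det A11 A12 A21 A22 h S
  have hT : ∃ r1 : ℝ, 0 < r1 ∧
      ((Matrix.fromBlocks A11 A12 A21 A22).submatrix
        (fun i : {x // x ∈ pflip S} => (i : k ⊕ l))
        (fun i : {x // x ∈ pflip S} => (i : k ⊕ l))).det = (r1 : ℂ) := by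
    rcases (pflip S).eq_empty_or_nonempty with he | hne
    · haveI : IsEmpty {x // x ∈ pflip S} :=
        ⟨fun x => Finset.notMem_empty x.1 (he ▸ x.2)⟩
      exact ⟨1, one_pos, by simp [Matrix.det_isEmpty]⟩
    · exact hA _ hne
  obtain ⟨r1, hr1, hd1⟩ := hT
  refine ⟨r1 / r0, div_pos hr1 hr0, ?_⟩
  rw [hd0, hd1] at hkey
  have hr0' : (r0 : ℂ) ≠ 0 := by exact_mod_cast hr0.ne'
  push_cast
  rw [eq_div_iff hr0']
  exact hkey

end Key

theorem stmt_14 {k l : Type*} [Fintype k] [Fintype l] [DecidableEq k] [DecidableEq l]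
    (A11 : Matrix k k ℂ) (A12 : Matrix k l ℂ) (A21 : Matrix l k ℂ) (A22 : Matrix l l ℂ)
    (h : IsUnit A11.det) :
    IsPMatrix (Matrix.fromBlocks A11 A12 A21 A22) ↔
    IsPMatrix (Matrix.fromBlocks A11⁻¹ (-(A11⁻¹ * A12)) (A21 * A11⁻¹)
      (A22 - A21 * A11⁻¹ * A12)) := by
  constructor
  · exact one_dir A11 A12 A21 A22 h
  · intro hB
    have h' : IsUnit (A11⁻¹).det := by
      rw [Matrix.det_nonsing_inv]
      exact isUnit_ringInverse.mpr h
    have := one_dir A11⁻¹ (-(A11⁻¹ * A12)) (A21 * A11⁻¹) (A22 - A21 * A11⁻¹ * A12) h' hB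
    have hinv : (A11⁻¹)⁻¹ = A11 := Matrix.nonsing_inv_nonsing_inv _ h
    rw [hinv] at this
    have e2 : -(A11 * -(A11⁻¹ * A12)) = A12 := by
      rw [Matrix.mul_neg, neg_neg, ← Matrix.mul_assoc, Matrix.mul_nonsing_inv _ h,
        Matrix.one_mul]
    have e3 : A21 * A11⁻¹ * A11 = A21 := by
      rw [Matrix.mul_assoc, Matrix.nonsing_inv_mul _ h, Matrix.mul_one]
    have e4 : A22 - A21 * A11⁻¹ * A12 - A21 * -(A11⁻¹ * A12) = A22 := by
      rw [Matrix.mul_neg, sub_neg_eq_add, ← Matrix.mul_assoc, sub_add_cancel]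
    rw [e2, e3, e4] at this
    exact this
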